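/- Assume E is symmetric ((v,w) ∈ E iff (w,v) ∈ E), the underlying undirected graph on V determined by E is connected, and there is a real number β > 0 such that every directed cycle with at least one edge that repeats no vertex other than its endpoint has total weight at least β times its number of edges. Fix f₀ ∈ V and let τ₁, τ₂ : V → ℝ be admissible with τ₁(f₀) = τ₂(f₀) = 0. Then there is a finite sequence τ₁ = σ₀, σ₁, …, σ_N = τ₂ of admissible functions in which each σ_{j+1} agrees with σ_j at every vertex except exactly one, and whose length satisfies N ≤ (Σ_{v ∈ V} |τ₁(v) − τ₂(v)|)/β + |V|. -/

import Mathlib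

/-- A directed walk from `a` to `b` along edge relation `E`, recorded as the list of its
vertices. -/
def IsWalk {V : Type*} (E : V → V → Prop) (a b : V) (l : List V) : Prop :=
  l.head? = some a ∧ l.getLast? = some b ∧ l.Chain' E

/-- The total weight of a walk. -/
def walkWeight {V : Type*} (δ : V → V → ℝ) (l : List V) : ℝ :=
  ((l.zip l.tail).map fun p => δ p.1 p.2).sum

lemma walkWeight_cons_cons {V : Type*} (δ : V → V → ℝ) (a b : V) (l : List V) :
    walkWeight δ (a :: b :: l) = δ a b + walkWeight δ (b :: l) := rfl

lemma walkWeight_map_range {V : Type*} (δ : V → V → ℝ) (n : ℕ) (ψ : ℕ → V) :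
    walkWeight δ ((List.range (n+1)).map ψ) = ∑ i ∈ Finset.range n, δ (ψ i) (ψ (i+1)) := by
  induction n generalizing ψ with
  | zero => simp [walkWeight, List.range_succ]
  | succ n ih =>
      have e1 : (List.range (n+2)).map ψ
          = ψ 0 :: (List.range (n+1)).map (fun i => ψ (i+1)) := by
        rw [List.range_succ_eq_map, List.map_cons, List.map_map]; rfl
      have e2 : (List.range (n+1)).map (fun i => ψ (i+1))
          = ψ 1 :: (List.range n).map (fun i => ψ (i+2)) := by
        rw [List.range_succ_eq_map, List.map_cons, List.map_map]; rfl
      rw [e1, e2, walkWeight_cons_cons, ← e2, ih (fun i => ψ (i+1)),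
        Finset.sum_range_succ' (fun i => δ (ψ i) (ψ (i+1))) n]
      ring

lemma push_exists {V : Type*} [Fintype V] (E : V → V → Prop) (δ : V → V → ℝ)
    {β : ℝ} (hβ : 0 < β)
    (hcyc : ∀ (a : V) (l : List V), IsWalk E a a l → 2 ≤ l.length → l.dropLast.Nodup →
      β * ((l.length : ℝ) - 1) ≤ walkWeight δ l)
    (t σ : V → ℝ) (ht : ∀ v w, E v w → t w - t v ≤ δ v w)
    (hσ : ∀ v w, E v w → σ w - σ v ≤ δ v w)
    (hne : ∃ v, t v < σ v) :
    ∃ v, t v < σ v ∧ ∀ w, E v w → σ w - δ v w ≤ max (t v) (σ v - β) := by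
  by_contra hcon
  push_neg at hcon
  obtain ⟨v₀, hv₀⟩ := hne
  have step : ∀ x : {v : V // t v < σ v}, ∃ y : {v : V // t v < σ v},
      E x.1 y.1 ∧ δ x.1 y.1 < σ y.1 - σ x.1 + β := by
    rintro ⟨x, hx⟩
    obtain ⟨w, hEw, hw⟩ := hcon x hx
    have h1 : t x < σ w - δ x w := lt_of_le_of_lt (le_max_left _ _) hw
    have h2 : σ x - β < σ w - δ x w := lt_of_le_of_lt (le_max_right _ _) hw
    have htw : t w < σ w := by have := ht x w hEw; linarith
    exact ⟨⟨w, htw⟩, hEw, by linarith⟩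
  choose φ hφE hφδ using step
  obtain ⟨a, b, hab, heq⟩ :=
    Finite.exists_ne_map_eq_of_infinite (fun n : ℕ => φ^[n] ⟨v₀, hv₀⟩)
  wlog hlt : a < b generalizing a b
  · exact this b a hab.symm heq.symm (by omega)
  set x : {v : V // t v < σ v} := φ^[a] ⟨v₀, hv₀⟩ with hx
  have hper : Function.IsPeriodicPt φ (b - a) x := by
    show φ^[b-a] x = x
    rw [hx, ← Function.iterate_add_apply]
    have : b - a + a = b := by omega
    rw [this]
    exact heq.symm
  set m := Function.minimalPeriod φ x with hm
  have hmpos : 0 < m := hper.minimalPeriod_pos (by omega)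
  have hfix : φ^[m] x = x := Function.isPeriodicPt_minimalPeriod φ x
  have hinj : Set.InjOn (fun n => φ^[n] x) (Set.Iio m) :=
    Function.iterate_injOn_Iio_minimalPeriod
  set ψ : ℕ → V := fun i => (φ^[i] x).1 with hψ
  have hψsucc : ∀ i, ψ (i+1) = (φ (φ^[i] x)).1 := by
    intro i; rw [hψ]; simp [Function.iterate_succ_apply']
  set l : List V := (List.range (m+1)).map ψ with hl
  have hlen : l.length = m + 1 := by simp [hl]
  have hwalk : IsWalk E (ψ 0) (ψ 0) l := by
    refine ⟨?_, ?_, ?_⟩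
    · rw [hl, List.range_succ_eq_map]; rfl
    · rw [hl, List.range_succ, List.map_append, List.map_singleton]
      rw [List.getLast?_concat]
      have : ψ m = ψ 0 := by rw [hψ]; simp [hfix]
      rw [this]
    · show List.IsChain E l
      rw [hl, List.isChain_map]
      rw [List.isChain_range_succ]
      intro i him
      rw [hψsucc i]
      exact hφE _
  have hnodup : l.dropLast.Nodup := by
    have : l.dropLast = (List.range m).map ψ := by
      rw [hl, List.range_succ, List.map_append, List.map_singleton, List.dropLast_concat]
    rw [this]
    refine List.Nodup.map_on ?_ List.nodup_range
    intro i hi j hj hij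
    have hi' : i ∈ Set.Iio m := List.mem_range.mp hi
    have hj' : j ∈ Set.Iio m := List.mem_range.mp hj
    exact hinj hi' hj' (Subtype.ext hij)
  have hW := hcyc (ψ 0) l hwalk (by omega) hnodup
  have hWeq : walkWeight δ l = ∑ i ∈ Finset.range m, δ (ψ i) (ψ (i+1)) :=
    walkWeight_map_range δ m ψ
  have hlt2 : ∑ i ∈ Finset.range m, δ (ψ i) (ψ (i+1))
      < ∑ i ∈ Finset.range m, (σ (ψ (i+1)) - σ (ψ i) + β) := by
    refine Finset.sum_lt_sum_of_nonempty (Finset.nonempty_range_iff.mpr hmpos.ne') ?_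
    intro i hi
    have := hφδ (φ^[i] x)
    rw [hψsucc i]
    exact this
  have htel : ∑ i ∈ Finset.range m, (σ (ψ (i+1)) - σ (ψ i) + β)
      = (m : ℝ) * β := by
    rw [Finset.sum_add_distrib, Finset.sum_range_sub (fun i => σ (ψ i))]
    have : ψ m = ψ 0 := by rw [hψ]; simp [hfix]
    rw [this]
    simp [mul_comm]
  rw [hlen] at hW
  push_cast at hW
  rw [hWeq] at hW
  rw [htel] at hlt2
  have : β * ((m:ℝ) + 1 - 1) = (m:ℝ) * β := by ring
  linarith [hW, hlt2]

lemma descent {V : Type*} [Fintype V] (E : V → V → Prop) (δ : V → V → ℝ)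
    {β : ℝ} (hβ : 0 < β)
    (hcyc : ∀ (a : V) (l : List V), IsWalk E a a l → 2 ≤ l.length → l.dropLast.Nodup →
      β * ((l.length : ℝ) - 1) ≤ walkWeight δ l)
    (t : V → ℝ) (ht : ∀ v w, E v w → t w - t v ≤ δ v w) :
    ∀ k : ℕ, ∀ σ : V → ℝ, (∀ v w, E v w → σ w - σ v ≤ δ v w) →
      (∑ v : V, max (σ v - t v) 0) / β
          + ((Finset.filter (fun v => t v < σ v) Finset.univ).card : ℝ) ≤ (k : ℝ) →
      ∃ (N : ℕ) (s : ℕ → V → ℝ),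
        (N : ℝ) ≤ (∑ v : V, max (σ v - t v) 0) / β
            + ((Finset.filter (fun v => t v < σ v) Finset.univ).card : ℝ) ∧
        s 0 = σ ∧ s N = (fun v => min (σ v) (t v)) ∧
        (∀ j ≤ N, ∀ v w, E v w → s j w - s j v ≤ δ v w) ∧
        (∀ j < N, ∃ v, s (j + 1) v ≠ s j v ∧ ∀ w, w ≠ v → s (j + 1) w = s j w) := by
  classical
  intro k
  induction k with
  | zero =>
      intro σ hσ hbound
      rcases Finset.eq_empty_or_nonempty (Finset.filter (fun v => t v < σ v) Finset.univ) with
        hemp | hne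
      · refine ⟨0, fun _ => σ, ?_, rfl, ?_, ?_, ?_⟩
        · have h1 : (0:ℝ) ≤ ∑ v : V, max (σ v - t v) 0 :=
            Finset.sum_nonneg fun v _ => le_max_right _ _
          have h2 : (0:ℝ) ≤ (∑ v : V, max (σ v - t v) 0) / β := div_nonneg h1 hβ.le
          have h3 : (0:ℝ) ≤ ((Finset.filter (fun v => t v < σ v) Finset.univ).card : ℝ) :=
            Nat.cast_nonneg _
          push_cast
          linarith
        · funext v
          have : ¬ t v < σ v := by
            intro h
            have : v ∈ Finset.filter (fun v => t v < σ v) Finset.univ := by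
              simp [h]
            simp [hemp] at this
          rw [min_eq_left (not_lt.mp this)]
        · intro j _; exact hσ
        · intro j hj; omega
      · exfalso
        have hc : 1 ≤ ((Finset.filter (fun v => t v < σ v) Finset.univ).card : ℝ) := by
          exact_mod_cast Finset.card_pos.mpr hne
        have h1 : (0:ℝ) ≤ (∑ v : V, max (σ v - t v) 0) / β :=
          div_nonneg (Finset.sum_nonneg fun v _ => le_max_right _ _) hβ.le
        push_cast at hbound
        linarith
  | succ k ih =>
      intro σ hσ hbound
      rcases Finset.eq_empty_or_nonempty (Finset.filter (fun v => t v < σ v) Finset.univ) with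
        hemp | hne
      · refine ⟨0, fun _ => σ, ?_, rfl, ?_, ?_, ?_⟩
        · have h1 : (0:ℝ) ≤ ∑ v : V, max (σ v - t v) 0 :=
            Finset.sum_nonneg fun v _ => le_max_right _ _
          have h2 : (0:ℝ) ≤ (∑ v : V, max (σ v - t v) 0) / β := div_nonneg h1 hβ.le
          have h3 : (0:ℝ) ≤ ((Finset.filter (fun v => t v < σ v) Finset.univ).card : ℝ) :=
            Nat.cast_nonneg _
          push_cast
          linarith
        · funext v
          have : ¬ t v < σ v := by
            intro h
            have : v ∈ Finset.filter (fun v => t v < σ v) Finset.univ := by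
              simp [h]
            simp [hemp] at this
          rw [min_eq_left (not_lt.mp this)]
        · intro j _; exact hσ
        · intro j hj; omega
      · obtain ⟨v, hv, hpush⟩ := push_exists E δ hβ hcyc t σ ht hσ (by
          obtain ⟨v, hv⟩ := hne
          simp only [Finset.mem_filter, Finset.mem_univ, true_and] at hv
          exact ⟨v, hv⟩)
        set c : ℝ := max (t v) (σ v - β) with hc
        set σ' : V → ℝ := Function.update σ v c with hσ'def
        have hσ'v : σ' v = c := Function.update_self v c σ
        have hσ'w : ∀ w, w ≠ v → σ' w = σ w := fun w hw => Function.update_of_ne hw c σ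
        have hc_lt : c < σ v := max_lt hv (by linarith)
        have htc : t v ≤ c := le_max_left _ _
        have hσ'adm : ∀ a b, E a b → σ' b - σ' a ≤ δ a b := by
          intro a b hab
          by_cases hA : a = v <;> by_cases hB : b = v
          · rw [hA, hB] at hab ⊢
            have := hσ v v hab
            rw [hσ'v]
            linarith
          · rw [hA] at hab ⊢
            rw [hσ'v, hσ'w b hB]
            have := hpush b hab
            linarith
          · rw [hB] at hab ⊢
            rw [hσ'v, hσ'w a hA]
            have := hσ a v hab
            linarith
          · rw [hσ'w a hA, hσ'w b hB]
            exact hσ a b hab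
        have hPhi' : ∑ w : V, max (σ' w - t w) 0
            = (∑ w : V, max (σ w - t w) 0) - (σ v - c) := by
          have h1 : max (σ' v - t v) 0 + ∑ w ∈ Finset.univ.erase v, max (σ' w - t w) 0
              = ∑ w : V, max (σ' w - t w) 0 :=
            Finset.add_sum_erase Finset.univ (fun w => max (σ' w - t w) 0) (Finset.mem_univ v)
          have h2 : max (σ v - t v) 0 + ∑ w ∈ Finset.univ.erase v, max (σ w - t w) 0
              = ∑ w : V, max (σ w - t w) 0 :=
            Finset.add_sum_erase Finset.univ (fun w => max (σ w - t w) 0) (Finset.mem_univ v)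
          have h3 : ∑ w ∈ Finset.univ.erase v, max (σ' w - t w) 0
              = ∑ w ∈ Finset.univ.erase v, max (σ w - t w) 0 :=
            Finset.sum_congr rfl fun w hw => by
              rw [hσ'w w (Finset.ne_of_mem_erase hw)]
          have h4 : max (σ' v - t v) 0 = c - t v := by
            rw [hσ'v]; exact max_eq_left (by linarith)
          have h5 : max (σ v - t v) 0 = σ v - t v := max_eq_left (by linarith)
          rw [← h1, ← h2, h3, h4, h5]; ring
        have hPsub : Finset.filter (fun w => t w < σ' w) Finset.univ
            ⊆ Finset.filter (fun w => t w < σ w) Finset.univ := by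
          intro w hw
          simp only [Finset.mem_filter, Finset.mem_univ, true_and] at hw ⊢
          by_cases h : w = v
          · subst h; exact hv
          · rwa [hσ'w w h] at hw
        have hkey : (∑ w : V, max (σ' w - t w) 0) / β
              + ((Finset.filter (fun w => t w < σ' w) Finset.univ).card : ℝ)
            ≤ (∑ w : V, max (σ w - t w) 0) / β
              + ((Finset.filter (fun w => t w < σ w) Finset.univ).card : ℝ) - 1 := by
          rcases le_or_gt (t v) (σ v - β) with hcase | hcase
          · have hceq : c = σ v - β := max_eq_right hcase
            have hcard : ((Finset.filter (fun w => t w < σ' w) Finset.univ).card : ℝ)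
                ≤ ((Finset.filter (fun w => t w < σ w) Finset.univ).card : ℝ) := by
              exact_mod_cast Finset.card_le_card hPsub
            have he : ∑ w : V, max (σ' w - t w) 0
                = (∑ w : V, max (σ w - t w) 0) - β := by
              rw [hPhi', hceq]; ring
            rw [he, sub_div, div_self hβ.ne']
            linarith
          · have hceq : c = t v := max_eq_left hcase.le
            have hvnot : v ∉ Finset.filter (fun w => t w < σ' w) Finset.univ := by
              simp [hσ'v, hceq]
            have hvmem : v ∈ Finset.filter (fun w => t w < σ w) Finset.univ := by
              simp [hv]
            have hcard : (Finset.filter (fun w => t w < σ' w) Finset.univ).card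
                < (Finset.filter (fun w => t w < σ w) Finset.univ).card :=
              Finset.card_lt_card
                ((Finset.ssubset_iff_of_subset hPsub).mpr ⟨v, hvmem, hvnot⟩)
            have hcard' : ((Finset.filter (fun w => t w < σ' w) Finset.univ).card : ℝ) + 1
                ≤ ((Finset.filter (fun w => t w < σ w) Finset.univ).card : ℝ) := by
              exact_mod_cast hcard
            have hle : (∑ w : V, max (σ' w - t w) 0) ≤ ∑ w : V, max (σ w - t w) 0 := by
              rw [hPhi']; linarith
            have hPhile : (∑ w : V, max (σ' w - t w) 0) / β
                ≤ (∑ w : V, max (σ w - t w) 0) / β := by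
              gcongr
            linarith
        obtain ⟨N', s', hN', hs'0, hs'N, hs'adm, hs'step⟩ := ih σ' hσ'adm (by
          push_cast at hbound ⊢
          linarith)
        refine ⟨N' + 1, fun j => if j = 0 then σ else s' (j - 1), ?_, ?_, ?_, ?_, ?_⟩
        · push_cast
          linarith
        · simp
        · funext w
          have hNe : N' + 1 ≠ 0 := by omega
          show (if N' + 1 = 0 then σ else s' (N' + 1 - 1)) w = min (σ w) (t w)
          rw [if_neg hNe]
          have hss : N' + 1 - 1 = N' := by omega
          rw [hss, hs'N]
          by_cases h : w = v
          · rw [h]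
            show min (σ' v) (t v) = min (σ v) (t v)
            rw [hσ'v, min_eq_right htc, min_eq_right hv.le]
          · show min (σ' w) (t w) = min (σ w) (t w)
            rw [hσ'w w h]
        · intro j hj a b hab
          by_cases h : j = 0
          · subst h
            show (if (0:ℕ) = 0 then σ else s' (0-1)) b - (if (0:ℕ) = 0 then σ else s' (0-1)) a
                ≤ δ a b
            rw [if_pos rfl]
            exact hσ a b hab
          · show (if j = 0 then σ else s' (j-1)) b - (if j = 0 then σ else s' (j-1)) a ≤ δ a b
            rw [if_neg h]
            exact hs'adm (j-1) (by omega) a b hab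
        · intro j hj
          by_cases h : j = 0
          · subst h
            refine ⟨v, ?_, ?_⟩
            · show (if (0:ℕ)+1 = 0 then σ else s' (0+1-1)) v ≠ (if (0:ℕ) = 0 then σ else s' (0-1)) v
              rw [if_neg (by omega : (0:ℕ)+1 ≠ 0), if_pos rfl]
              show s' 0 v ≠ σ v
              rw [hs'0]
              rw [hσ'v]
              exact ne_of_lt hc_lt
            · intro w hw
              show (if (0:ℕ)+1 = 0 then σ else s' (0+1-1)) w = (if (0:ℕ) = 0 then σ else s' (0-1)) w
              rw [if_neg (by omega : (0:ℕ)+1 ≠ 0), if_pos rfl]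
              show s' 0 w = σ w
              rw [hs'0, hσ'w w hw]
          · obtain ⟨w, hw1, hw2⟩ := hs'step (j - 1) (by omega)
            have hj1 : j - 1 + 1 = j := by omega
            rw [hj1] at hw1 hw2
            refine ⟨w, ?_, ?_⟩
            · show (if j+1 = 0 then σ else s' (j+1-1)) w ≠ (if j = 0 then σ else s' (j-1)) w
              rw [if_neg (by omega : j + 1 ≠ 0), if_neg h]
              have hjj : j + 1 - 1 = j := by omega
              rw [hjj]
              exact hw1
            · intro u hu
              show (if j+1 = 0 then σ else s' (j+1-1)) u = (if j = 0 then σ else s' (j-1)) u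
              rw [if_neg (by omega : j + 1 ≠ 0), if_neg h]
              have hjj : j + 1 - 1 = j := by omega
              rw [hjj]
              exact hw2 u hu

/-- Assume `E` is symmetric, the underlying undirected graph is connected, and there is a
`β > 0` such that every directed cycle (with at least one edge) repeating no vertex other
than its endpoint has weight at least `β` times its number of edges.  Then any two
admissible functions vanishing at `f₀` are joined by a sequence of admissible functions,
consecutive ones differing at exactly one vertex, of length at most
`(Σ_v |τ₁ v - τ₂ v|)/β + |V|`. -/
theorem admissible_connected_by_single_site_moves
    {V : Type*} [Fintype V] (E : V → V → Prop) (δ : V → V → ℝ)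
    (hsymm : ∀ v w, E v w ↔ E w v)
    (hconn : ∀ v w : V, ∃ l : List V, IsWalk E v w l)
    (β : ℝ) (hβ : 0 < β)
    (hcyc : ∀ (a : V) (l : List V), IsWalk E a a l → 2 ≤ l.length → l.dropLast.Nodup →
      β * ((l.length : ℝ) - 1) ≤ walkWeight δ l)
    (f₀ : V) (τ₁ τ₂ : V → ℝ)
    (h₁ : (∀ v w, E v w → τ₁ w - τ₁ v ≤ δ v w) ∧ τ₁ f₀ = 0)
    (h₂ : (∀ v w, E v w → τ₂ w - τ₂ v ≤ δ v w) ∧ τ₂ f₀ = 0) :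
    ∃ (N : ℕ) (σ : ℕ → V → ℝ),
      (N : ℝ) ≤ (∑ v : V, |τ₁ v - τ₂ v|) / β + Fintype.card V ∧
      σ 0 = τ₁ ∧ σ N = τ₂ ∧
      (∀ j ≤ N, ∀ v w, E v w → σ j w - σ j v ≤ δ v w) ∧
      (∀ j < N, ∃ v, σ (j + 1) v ≠ σ j v ∧ ∀ w, w ≠ v → σ (j + 1) w = σ j w) := by
  classical
  obtain ⟨hτ₁, -⟩ := h₁
  obtain ⟨hτ₂, -⟩ := h₂
  set m' : V → ℝ := fun v => min (τ₁ v) (τ₂ v) with hm'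
  have hm'adm : ∀ v w, E v w → m' w - m' v ≤ δ v w := by
    intro v w hvw
    rcases le_total (τ₁ v) (τ₂ v) with h | h
    · have e : m' v = τ₁ v := min_eq_left h
      have e2 : m' w ≤ τ₁ w := min_le_left _ _
      have := hτ₁ v w hvw
      rw [e]
      linarith
    · have e : m' v = τ₂ v := min_eq_right h
      have e2 : m' w ≤ τ₂ w := min_le_right _ _
      have := hτ₂ v w hvw
      rw [e]
      linarith
  -- Phase 1 : from τ₁ down to m'
  obtain ⟨N₁, s₁, hN₁, hs₁0, hs₁N, hs₁adm, hs₁step⟩ :=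
    descent E δ hβ hcyc τ₂ hτ₂
      (⌈(∑ v : V, max (τ₁ v - τ₂ v) 0) / β
        + ((Finset.filter (fun v => τ₂ v < τ₁ v) Finset.univ).card : ℝ)⌉₊)
      τ₁ hτ₁ (Nat.le_ceil _)
  -- Phase 2 : from τ₂ down to m'
  obtain ⟨N₂, s₂, hN₂, hs₂0, hs₂N, hs₂adm, hs₂step⟩ :=
    descent E δ hβ hcyc m' hm'adm
      (⌈(∑ v : V, max (τ₂ v - m' v) 0) / β
        + ((Finset.filter (fun v => m' v < τ₂ v) Finset.univ).card : ℝ)⌉₊)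
      τ₂ hτ₂ (Nat.le_ceil _)
  have hs₁N' : s₁ N₁ = m' := by rw [hs₁N, hm']
  have hs₂N' : s₂ N₂ = m' := by
    rw [hs₂N]
    funext v
    show min (τ₂ v) (m' v) = m' v
    rw [hm']
    show min (τ₂ v) (min (τ₁ v) (τ₂ v)) = min (τ₁ v) (τ₂ v)
    rw [min_comm (τ₁ v) (τ₂ v), ← min_assoc, min_self, min_comm]
  set s : ℕ → V → ℝ := fun j => if j ≤ N₁ then s₁ j else s₂ (N₁ + N₂ - j) with hs
  have hsle : ∀ j, j ≤ N₁ → s j = s₁ j := fun j hj => if_pos hj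
  have hsgt : ∀ j, N₁ < j → s j = s₂ (N₁ + N₂ - j) := fun j hj => if_neg (by omega)
  refine ⟨N₁ + N₂, s, ?_, ?_, ?_, ?_, ?_⟩
  · -- the numeric bound
    have hsum : (∑ v : V, max (τ₁ v - τ₂ v) 0) + (∑ v : V, max (τ₂ v - m' v) 0)
        = ∑ v : V, |τ₁ v - τ₂ v| := by
      rw [← Finset.sum_add_distrib]
      refine Finset.sum_congr rfl fun v _ => ?_
      rw [hm']
      show max (τ₁ v - τ₂ v) 0 + max (τ₂ v - min (τ₁ v) (τ₂ v)) 0 = |τ₁ v - τ₂ v|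
      rcases le_total (τ₁ v) (τ₂ v) with h | h
      · rw [min_eq_left h, max_eq_right (by linarith), max_eq_left (by linarith),
          abs_of_nonpos (by linarith)]
        ring
      · rw [min_eq_right h, max_eq_left (by linarith), max_eq_right (by linarith),
          abs_of_nonneg (by linarith)]
        ring
    have hdisj : Disjoint (Finset.filter (fun v => τ₂ v < τ₁ v) Finset.univ)
        (Finset.filter (fun v => m' v < τ₂ v) Finset.univ) := by
      rw [Finset.disjoint_left]
      intro v hv1 hv2
      simp only [Finset.mem_filter, Finset.mem_univ, true_and] at hv1 hv2
      have hv2' : min (τ₁ v) (τ₂ v) < τ₂ v := hv2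
      rw [min_eq_right hv1.le] at hv2'
      exact lt_irrefl _ hv2'
    have hcards : (Finset.filter (fun v => τ₂ v < τ₁ v) Finset.univ).card
        + (Finset.filter (fun v => m' v < τ₂ v) Finset.univ).card ≤ Fintype.card V := by
      rw [← Finset.card_union_of_disjoint hdisj]
      exact Finset.card_le_univ _
    have hdiv : (∑ v : V, max (τ₁ v - τ₂ v) 0) / β + (∑ v : V, max (τ₂ v - m' v) 0) / β
        = (∑ v : V, |τ₁ v - τ₂ v|) / β := by
      rw [← add_div, hsum]
    have hcards' : ((Finset.filter (fun v => τ₂ v < τ₁ v) Finset.univ).card : ℝ)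
        + ((Finset.filter (fun v => m' v < τ₂ v) Finset.univ).card : ℝ)
        ≤ (Fintype.card V : ℝ) := by exact_mod_cast hcards
    push_cast
    linarith
  · rw [hsle 0 (by omega), hs₁0]
  · by_cases h0 : N₂ = 0
    · have e1 : s (N₁ + N₂) = s₁ N₁ := by
        rw [h0]
        exact hsle N₁ le_rfl
      rw [e1, hs₁N', ← hs₂N', h0, hs₂0]
    · rw [hsgt (N₁ + N₂) (by omega), Nat.sub_self, hs₂0]
  · intro j hj a b hab
    by_cases h : j ≤ N₁
    · rw [hsle j h]
      exact hs₁adm j h a b hab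
    · rw [hsgt j (by omega)]
      exact hs₂adm (N₁ + N₂ - j) (by omega) a b hab
  · intro j hj
    by_cases h1 : j + 1 ≤ N₁
    · rw [hsle (j+1) h1, hsle j (by omega)]
      exact hs₁step j (by omega)
    · by_cases h2 : j ≤ N₁
      · -- j = N₁, crossing point
        have hjN : j = N₁ := by omega
        have hN₂pos : 0 < N₂ := by omega
        obtain ⟨v, hv1, hv2⟩ := hs₂step (N₂ - 1) (by omega)
        have e : N₂ - 1 + 1 = N₂ := by omega
        rw [e] at hv1 hv2
        have eA : s (j + 1) = s₂ (N₂ - 1) := by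
          have harith : N₁ + N₂ - (j + 1) = N₂ - 1 := by omega
          rw [hsgt (j+1) (by omega), harith]
        have eB : s j = s₂ N₂ := by
          rw [hsle j h2, hjN, hs₁N', ← hs₂N']
        refine ⟨v, ?_, ?_⟩
        · rw [eA, eB]
          exact (Ne.symm hv1)
        · intro w hw
          rw [eA, eB]
          exact (hv2 w hw).symm
      · -- both beyond N₁
        obtain ⟨v, hv1, hv2⟩ := hs₂step (N₁ + N₂ - (j+1)) (by omega)
        have e : N₁ + N₂ - (j+1) + 1 = N₁ + N₂ - j := by omega
        rw [e] at hv1 hv2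
        have eA : s (j + 1) = s₂ (N₁ + N₂ - (j+1)) := hsgt (j+1) (by omega)
        have eB : s j = s₂ (N₁ + N₂ - j) := hsgt j (by omega)
        refine ⟨v, ?_, ?_⟩
        · rw [eA, eB]
          exact (Ne.symm hv1)
        · intro w hw
          rw [eA, eB]
          exact (hv2 w hw).symm
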